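/- (Subideal Border Division) Let O_F = {t_1 f_{α_1},…,t_μ f_{α_μ}} be an F-order ideal with each O_i nonempty, let ∂O_F = {b_1 f_{β_1},…,b_ν f_{β_ν}} be its border, and let G = {g_1,…,g_ν} be an O_F-subideal border prebasis. Then every f ∈ J with representation f = p_1 f_1 + ⋯ + p_m f_m and P = (p_1 f_1,…,p_m f_m) can be written as f = h_1 g_1 + ⋯ + h_ν g_ν + c_1 t_1 f_{α_1} + ⋯ + c_μ t_μ f_{α_μ} with h_1,…,h_ν ∈ P and c_1,…,c_μ ∈ K such that deg(h_i) ≤ ind_{O_F}(P) − 1 for all i ∈ {1,…,ν} with h_i ≠ 0. -/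

import Mathlib

open MvPolynomial

/-- An order ideal: a finite set of terms (exponent vectors), closed under divisors. -/
def IsOrderIdeal {n : ℕ} (O : Finset (Fin n →₀ ℕ)) : Prop :=
  ∀ t ∈ O, ∀ s : Fin n →₀ ℕ, s ≤ t → s ∈ O

/-- The degree of a term (exponent vector). -/
def termDeg {n : ℕ} (t : Fin n →₀ ℕ) : ℕ := t.sum fun _ e => e

/-- The `F`-order ideal `O_F = O_1·f_1 ∪ ⋯ ∪ O_m·f_m`, encoded as the set of pairs
`(t, i)` with `t ∈ O_i`; a pair `(t, i)` represents the `F`-term `t·f_i`. -/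
def fPairs {n m : ℕ} (O : Fin m → Finset (Fin n →₀ ℕ)) : Set ((Fin n →₀ ℕ) × Fin m) :=
  {p | p.1 ∈ O p.2}

/-- The border `∂S = (x_1·S ∪ ⋯ ∪ x_n·S) \ S` of a set `S` of `F`-terms. -/
def borderP {n m : ℕ} (S : Set ((Fin n →₀ ℕ) × Fin m)) : Set ((Fin n →₀ ℕ) × Fin m) :=
  (⋃ j : Fin n, (fun p => (p.1 + Finsupp.single j 1, p.2)) '' S) \ S

/-- The `k`-th border closure: `∂̄⁰S = S` and `∂̄^{k+1}S = ∂̄^k S ∪ ∂(∂̄^k S)`. -/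
def borderClosureP {n m : ℕ} (S : Set ((Fin n →₀ ℕ) × Fin m)) :
    ℕ → Set ((Fin n →₀ ℕ) × Fin m)
  | 0 => S
  | k + 1 => borderClosureP S k ∪ borderP (borderClosureP S k)

/-- The `O_F`-index of an `F`-term: `ind_{O_F}(t·f_i) = min {k | t·f_i ∈ ∂̄^k O_F}`. -/
noncomputable def indOF {n m : ℕ} (S : Set ((Fin n →₀ ℕ) × Fin m)) (p : (Fin n →₀ ℕ) × Fin m) : ℕ :=
  sInf {k | p ∈ borderClosureP S k}

/-- The `O_F`-index of a representation `(p_1·f_1, …, p_m·f_m)` of a polynomial of `J`: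
the maximum of `ind_{O_F}(t·f_i)` over `i` and `t ∈ Supp(p_i)`. -/
noncomputable def indRep {K : Type*} [Field K] {n m : ℕ}
    (O : Fin m → Finset (Fin n →₀ ℕ)) (p : Fin m → MvPolynomial (Fin n) K) : ℕ :=
  Finset.univ.sup fun i => (p i).support.sup fun u => indOF (fPairs O) (u, i)

namespace SBD

variable {n m : ℕ}

lemma termDeg_add (x y : Fin n →₀ ℕ) : termDeg (x + y) = termDeg x + termDeg y := by
  simpa [termDeg] using Finsupp.sum_add_index' (by simp) (by simp)

lemma termDeg_single (a : Fin n) (b : ℕ) : termDeg (Finsupp.single a b) = b := by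
  simp [termDeg, Finsupp.sum_single_index]

lemma closure_succ (S : Set ((Fin n →₀ ℕ) × Fin m)) (k : ℕ) :
    borderClosureP S k ⊆ borderClosureP S (k+1) := Set.subset_union_left

lemma closure_mono (S : Set ((Fin n →₀ ℕ) × Fin m)) {k k' : ℕ} (h : k ≤ k') :
    borderClosureP S k ⊆ borderClosureP S k' := by
  induction h with
  | refl => exact subset_rfl
  | step _ ih => exact ih.trans (closure_succ S _)

lemma step_mem (S : Set ((Fin n →₀ ℕ) × Fin m)) {v : Fin n →₀ ℕ} {i : Fin m} {k : ℕ} (j : Fin n)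
    (h : (v, i) ∈ borderClosureP S k) :
    (v + Finsupp.single j 1, i) ∈ borderClosureP S (k+1) := by
  by_cases hc : (v + Finsupp.single j 1, i) ∈ borderClosureP S k
  · exact Set.mem_union_left _ hc
  · exact Set.mem_union_right _ ⟨Set.mem_iUnion.mpr ⟨j, ⟨(v, i), h, rfl⟩⟩, hc⟩

lemma add_single_mem (S : Set ((Fin n →₀ ℕ) × Fin m)) {v : Fin n →₀ ℕ} {i : Fin m} {k : ℕ}
    (a : Fin n) (bb : ℕ) (h : (v, i) ∈ borderClosureP S k) :
    (v + Finsupp.single a bb, i) ∈ borderClosureP S (k + bb) := by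
  induction bb with
  | zero => simpa using h
  | succ b ih =>
      have : v + Finsupp.single a (b+1) = (v + Finsupp.single a b) + Finsupp.single a 1 := by
        rw [add_assoc, ← Finsupp.single_add]
      rw [this]
      exact step_mem S a ih

lemma add_mem (S : Set ((Fin n →₀ ℕ) × Fin m)) {v : Fin n →₀ ℕ} {i : Fin m} {k : ℕ}
    (w : Fin n →₀ ℕ) (h : (v, i) ∈ borderClosureP S k) :
    (v + w, i) ∈ borderClosureP S (k + termDeg w) := by
  induction w using Finsupp.induction generalizing v k with
  | zero => simpa [termDeg] using h
  | single_add a bb w ha hb ih =>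
      have h1 := ih (v := v) (k := k) h
      have h2 := add_single_mem S a bb h1
      have : v + (Finsupp.single a bb + w) = (v + w) + Finsupp.single a bb := by abel
      rw [this]
      have : k + termDeg (Finsupp.single a bb + w) = k + termDeg w + bb := by
        rw [termDeg_add, termDeg_single]; omega
      rw [this]
      exact h2

end SBD

namespace SBD

lemma factor {n m ν : ℕ} (S : Set ((Fin n →₀ ℕ) × Fin m))
    (b : Fin ν → (Fin n →₀ ℕ)) (β : Fin ν → Fin m)
    (hB : (Set.range fun j => (b j, β j)) = borderP S) :
    ∀ k : ℕ, ∀ u : Fin n →₀ ℕ, ∀ i : Fin m,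
      (u, i) ∈ borderClosureP S k → (u, i) ∉ S →
      ∃ (j : Fin ν) (s : Fin n →₀ ℕ), u = s + b j ∧ β j = i ∧ termDeg s ≤ k - 1 := by
  intro k
  induction k with
  | zero => intro u i hmem hns; exact absurd hmem hns
  | succ k ih =>
      intro u i hmem hns
      rcases hmem with hmem | hmem
      · obtain ⟨j, s, h1, h2, h3⟩ := ih u i hmem hns
        exact ⟨j, s, h1, h2, le_trans h3 (by omega)⟩
      · obtain ⟨hx, hnc⟩ := hmem
        rw [Set.mem_iUnion] at hx
        obtain ⟨a, ⟨⟨v, iv⟩, hv, heq⟩⟩ := hx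
        rw [Prod.mk.injEq] at heq
        obtain ⟨heq1, heq2⟩ := heq
        simp only at heq1 heq2
        subst heq2
        by_cases hvS : (v, iv) ∈ S
        · have hub : (u, iv) ∈ borderP S := by
            refine ⟨Set.mem_iUnion.mpr ⟨a, ⟨(v, iv), hvS, by simp [heq1]⟩⟩, hns⟩
          rw [← hB] at hub
          obtain ⟨j, hj⟩ := hub
          refine ⟨j, 0, ?_, ?_, by simp [termDeg]⟩
          · rw [zero_add]; exact (congrArg Prod.fst hj).symm
          · exact congrArg Prod.snd hj
        · obtain ⟨j, s, h1, h2, h3⟩ := ih v iv hv hvS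
          refine ⟨j, s + Finsupp.single a 1, ?_, h2, ?_⟩
          · rw [← heq1, h1]; abel
          · rw [termDeg_add, termDeg_single]
            have hk : k ≠ 0 := by
              rintro rfl
              exact hvS hv
            omega

end SBD

namespace SBD

lemma key {K : Type*} [Field K] {n m μ ν : ℕ}
    (f : Fin m → MvPolynomial (Fin n) K)
    (O : Fin m → Finset (Fin n →₀ ℕ))
    (t : Fin μ → (Fin n →₀ ℕ)) (α : Fin μ → Fin m)
    (hOF : (Set.range fun i => (t i, α i)) = fPairs O)
    (b : Fin ν → (Fin n →₀ ℕ)) (β : Fin ν → Fin m)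
    (hB : (Set.range fun j => (b j, β j)) = borderP (fPairs O))
    (g : Fin ν → MvPolynomial (Fin n) K) (c : Fin μ → Fin ν → K)
    (hg : ∀ j, g j = monomial (b j) (1 : K) * f (β j) -
      ∑ i, c i j • (monomial (t i) (1 : K) * f (α i))) :
    ∀ k : ℕ, ∀ u : Fin n →₀ ℕ, ∀ i : Fin m, (u, i) ∈ borderClosureP (fPairs O) k →
      ∃ (h : Fin ν → MvPolynomial (Fin n) K) (d : Fin μ → K),
        monomial u (1 : K) * f i =
          ∑ j, h j * g j + ∑ l, d l • (monomial (t l) (1 : K) * f (α l)) ∧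
        ∀ j, (h j).totalDegree + 1 ≤ k ∨ h j = 0 := by
  intro k
  induction k using Nat.strong_induction_on with
  | _ k ih =>
  intro u i hmem
  by_cases hS : (u, i) ∈ fPairs O
  · rw [← hOF] at hS
    obtain ⟨l, hl⟩ := hS
    have hl1 : t l = u := congrArg Prod.fst hl
    have hl2 : α l = i := congrArg Prod.snd hl
    refine ⟨0, fun l' => if l' = l then 1 else 0, ?_, fun j => Or.inr rfl⟩
    simp [ite_smul, Finset.sum_ite_eq', hl1, hl2]
  · have hk : k ≠ 0 := by
      rintro rfl
      exact hS hmem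
    obtain ⟨j₀, s, hu, hβ, hs⟩ := factor (fPairs O) b β hB k u i hmem hS
    have hmem' : ∀ l : Fin μ, (s + t l, α l) ∈ borderClosureP (fPairs O) (termDeg s) := by
      intro l
      have h0 : (t l, α l) ∈ borderClosureP (fPairs O) 0 := by
        rw [← hOF]
        exact ⟨l, rfl⟩
      have := add_mem (fPairs O) s h0
      rw [zero_add] at this
      rwa [add_comm]
    have hlt : termDeg s < k := by omega
    have hrec : ∀ l : Fin μ, ∃ (H : Fin ν → MvPolynomial (Fin n) K) (D : Fin μ → K),
        monomial (s + t l) (1 : K) * f (α l) =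
          ∑ j, H j * g j + ∑ l', D l' • (monomial (t l') (1 : K) * f (α l')) ∧
        ∀ j, (H j).totalDegree + 1 ≤ termDeg s ∨ H j = 0 :=
      fun l => ih (termDeg s) hlt (s + t l) (α l) (hmem' l)
    choose H D hHD hdeg using hrec
    refine ⟨fun j => (if j = j₀ then monomial s (1 : K) else 0) + ∑ l, c l j₀ • H l j,
      fun l' => ∑ l, c l j₀ * D l l', ?_, ?_⟩
    · have e1 : monomial u (1 : K) * f i =
          monomial s 1 * (monomial (b j₀) 1 * f (β j₀)) := by
        rw [hβ, hu, ← mul_assoc, monomial_mul, one_mul]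
      have e2 : monomial (b j₀) (1 : K) * f (β j₀) =
          g j₀ + ∑ l, c l j₀ • (monomial (t l) 1 * f (α l)) := by
        rw [hg j₀]; ring
      have e3 : ∀ l, monomial s (1 : K) * (c l j₀ • (monomial (t l) 1 * f (α l))) =
          c l j₀ • (monomial (s + t l) 1 * f (α l)) := by
        intro l
        rw [mul_smul_comm, ← mul_assoc, monomial_mul, one_mul]
      calc monomial u (1 : K) * f i
          = monomial s 1 * g j₀ + ∑ l, c l j₀ • (monomial (s + t l) 1 * f (α l)) := by
            rw [e1, e2, mul_add, Finset.mul_sum]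
            exact congrArg _ (Finset.sum_congr rfl fun l _ => e3 l)
        _ = monomial s 1 * g j₀ + ∑ l, c l j₀ •
              (∑ j, H l j * g j + ∑ l', D l l' • (monomial (t l') 1 * f (α l'))) := by
            simp only [hHD]
        _ = ∑ j, ((if j = j₀ then monomial s (1 : K) else 0) + ∑ l, c l j₀ • H l j) * g j
            + ∑ l', (∑ l, c l j₀ * D l l') • (monomial (t l') 1 * f (α l')) := by
            simp only [add_mul, Finset.sum_add_distrib, smul_add, Finset.smul_sum,
              Finset.sum_smul, smul_smul, ite_mul, zero_mul, Finset.sum_ite_eq',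
              Finset.mem_univ, if_true, smul_mul_assoc]
            have S1 : (∑ x : Fin ν, (∑ l : Fin μ, c l j₀ • H l x) * g x)
                = ∑ y : Fin μ, ∑ x : Fin ν, c y j₀ • (H y x * g x) := by
              rw [Finset.sum_comm]
              refine Finset.sum_congr rfl fun x _ => ?_
              rw [Finset.sum_mul]
              exact Finset.sum_congr rfl fun l _ => smul_mul_assoc _ _ _
            have S2 : (∑ x : Fin μ, ∑ x1 : Fin μ,
                  (c x1 j₀ * D x1 x) • (monomial (t x) (1 : K) * f (α x)))
                = ∑ x : Fin μ, ∑ x1 : Fin μ,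
                  (c x j₀ * D x x1) • (monomial (t x1) (1 : K) * f (α x1)) :=
              Finset.sum_comm
            rw [S1, S2, ← add_assoc]
    · intro j
      left
      show ((if j = j₀ then monomial s (1 : K) else 0) + ∑ l, c l j₀ • H l j).totalDegree + 1 ≤ k
      have hb1 : ((if j = j₀ then monomial s (1 : K) else 0) : MvPolynomial (Fin n) K).totalDegree
          ≤ termDeg s := by
        split
        · rw [totalDegree_monomial _ one_ne_zero]; rfl
        · simp
      have hb2 : (∑ l, c l j₀ • H l j).totalDegree ≤ termDeg s := by
        refine le_trans (totalDegree_finset_sum _ _) (Finset.sup_le fun l _ => ?_)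
        refine le_trans (totalDegree_smul_le _ _) ?_
        rcases hdeg l j with h' | h'
        · omega
        · simp [h']
      have := totalDegree_add ((if j = j₀ then monomial s (1 : K) else 0)) (∑ l, c l j₀ • H l j)
      have hend : ((if j = j₀ then monomial s (1 : K) else 0) + ∑ l, c l j₀ • H l j).totalDegree
          ≤ termDeg s := le_trans this (max_le hb1 hb2)
      omega

end SBD


/-- **Subideal Border Division.**  Let `O_F = {t_1·f_{α_1},…,t_μ·f_{α_μ}}` be an `F`-order
ideal with all `O_i` nonempty, let `∂O_F = {b_1·f_{β_1},…,b_ν·f_{β_ν}}` be its border, and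
let `G = {g_1,…,g_ν}` be an `O_F`-subideal border prebasis.  Then every `f ∈ J` with
representation `f = p_1 f_1 + ⋯ + p_m f_m` can be written as
`f = h_1 g_1 + ⋯ + h_ν g_ν + c_1 t_1 f_{α_1} + ⋯ + c_μ t_μ f_{α_μ}` with
`deg(h_j) ≤ ind_{O_F}(P) − 1` for all `j` with `h_j ≠ 0`. -/
theorem stmt_13 {K : Type*} [Field K] {n m μ ν : ℕ}
    (f : Fin m → MvPolynomial (Fin n) K) (hf : ∀ i, f i ≠ 0)
    (O : Fin m → Finset (Fin n →₀ ℕ)) (hO : ∀ i, IsOrderIdeal (O i))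
    (hne : ∀ i, (O i).Nonempty)
    (t : Fin μ → (Fin n →₀ ℕ)) (α : Fin μ → Fin m)
    (hOF : (Set.range fun i => (t i, α i)) = fPairs O)
    (b : Fin ν → (Fin n →₀ ℕ)) (β : Fin ν → Fin m)
    (hB : (Set.range fun j => (b j, β j)) = borderP (fPairs O))
    (g : Fin ν → MvPolynomial (Fin n) K) (c : Fin μ → Fin ν → K)
    (hg : ∀ j, g j = monomial (b j) (1 : K) * f (β j) -
      ∑ i, c i j • (monomial (t i) (1 : K) * f (α i)))
    (p : Fin m → MvPolynomial (Fin n) K) :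
    ∃ (h : Fin ν → MvPolynomial (Fin n) K) (d : Fin μ → K),
      ∑ i, p i * f i =
        ∑ j, h j * g j + ∑ i, d i • (monomial (t i) (1 : K) * f (α i)) ∧
      ∀ j, h j ≠ 0 → (h j).totalDegree < indRep O p := by
  classical
  set k := indRep O p with hkdef
  have hz : ∀ i : Fin m, ((0 : Fin n →₀ ℕ), i) ∈ fPairs O := by
    intro i
    obtain ⟨x, hx⟩ := hne i
    exact hO i x hx 0 zero_le
  have hclos : ∀ (i : Fin m), ∀ u ∈ (p i).support,
      (u, i) ∈ borderClosureP (fPairs O) k := by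
    intro i u hu
    have h1 : (u, i) ∈ borderClosureP (fPairs O) (termDeg u) := by
      have h0 : ((0 : Fin n →₀ ℕ), i) ∈ borderClosureP (fPairs O) 0 := hz i
      have := SBD.add_mem (fPairs O) u h0
      simpa using this
    have h2 : (u, i) ∈ borderClosureP (fPairs O) (indOF (fPairs O) (u, i)) :=
      Nat.sInf_mem (s := {k' : ℕ | (u, i) ∈ borderClosureP (fPairs O) k'}) ⟨termDeg u, h1⟩
    have h3 : indOF (fPairs O) (u, i) ≤ k := by
      calc indOF (fPairs O) (u, i)
          ≤ (p i).support.sup (fun u => indOF (fPairs O) (u, i)) :=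
            Finset.le_sup (f := fun u => indOF (fPairs O) (u, i)) hu
        _ ≤ k :=
          Finset.le_sup (f := fun i => (p i).support.sup fun u => indOF (fPairs O) (u, i))
            (Finset.mem_univ i)
    exact SBD.closure_mono _ h3 h2
  have hkey : ∀ (u : Fin n →₀ ℕ) (i : Fin m),
      ∃ (h : Fin ν → MvPolynomial (Fin n) K) (d : Fin μ → K),
        ((u, i) ∈ borderClosureP (fPairs O) k →
          monomial u (1 : K) * f i =
            ∑ j, h j * g j + ∑ l, d l • (monomial (t l) (1 : K) * f (α l))) ∧
        ∀ j, (h j).totalDegree + 1 ≤ k ∨ h j = 0 := by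
    intro u i
    by_cases hm : (u, i) ∈ borderClosureP (fPairs O) k
    · obtain ⟨h, d, he, hd⟩ := SBD.key f O t α hOF b β hB g c hg k u i hm
      exact ⟨h, d, fun _ => he, hd⟩
    · exact ⟨0, 0, fun hc => absurd hc hm, fun j => Or.inr rfl⟩
  choose H D hHD hHdeg using hkey
  refine ⟨fun j => ∑ i, ∑ u ∈ (p i).support, coeff u (p i) • H u i j,
    fun l => ∑ i, ∑ u ∈ (p i).support, coeff u (p i) * D u i l, ?_, ?_⟩
  · have expand : ∀ i, p i * f i =
        ∑ u ∈ (p i).support, coeff u (p i) • (monomial u (1 : K) * f i) := by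
      intro i
      conv_lhs => rw [(p i).as_sum]
      rw [Finset.sum_mul]
      refine Finset.sum_congr rfl fun u hu => ?_
      rw [← smul_mul_assoc, smul_monomial, smul_eq_mul, mul_one]
    have T1 : ∑ j, (∑ i, ∑ u ∈ (p i).support, coeff u (p i) • H u i j) * g j
        = ∑ i, ∑ u ∈ (p i).support, coeff u (p i) • ∑ j, H u i j * g j := by
      simp only [Finset.sum_mul, smul_mul_assoc, Finset.smul_sum]
      rw [Finset.sum_comm]
      exact Finset.sum_congr rfl fun i _ => Finset.sum_comm
    have T2 : ∑ l, (∑ i, ∑ u ∈ (p i).support, coeff u (p i) * D u i l) •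
          (monomial (t l) (1 : K) * f (α l))
        = ∑ i, ∑ u ∈ (p i).support, coeff u (p i) •
          ∑ l, D u i l • (monomial (t l) (1 : K) * f (α l)) := by
      simp only [Finset.sum_smul, mul_smul, Finset.smul_sum]
      rw [Finset.sum_comm]
      exact Finset.sum_congr rfl fun i _ => Finset.sum_comm
    calc ∑ i, p i * f i
        = ∑ i, ∑ u ∈ (p i).support, coeff u (p i) •
            (∑ j, H u i j * g j + ∑ l, D u i l • (monomial (t l) (1 : K) * f (α l))) := by
          refine Finset.sum_congr rfl fun i _ => ?_
          rw [expand i]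
          exact Finset.sum_congr rfl fun u hu => by rw [hHD u i (hclos i u hu)]
      _ = (∑ i, ∑ u ∈ (p i).support, coeff u (p i) • ∑ j, H u i j * g j)
          + ∑ i, ∑ u ∈ (p i).support, coeff u (p i) •
            ∑ l, D u i l • (monomial (t l) (1 : K) * f (α l)) := by
          simp only [smul_add, Finset.sum_add_distrib]
      _ = ∑ j, (∑ i, ∑ u ∈ (p i).support, coeff u (p i) • H u i j) * g j
          + ∑ l, (∑ i, ∑ u ∈ (p i).support, coeff u (p i) * D u i l) •
            (monomial (t l) (1 : K) * f (α l)) := by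
          rw [T1, T2]
  · intro j hj
    have hj' : (∑ i, ∑ u ∈ (p i).support, coeff u (p i) • H u i j) ≠ 0 := hj
    show (∑ i, ∑ u ∈ (p i).support, coeff u (p i) • H u i j).totalDegree < k
    rcases Nat.eq_zero_or_pos k with hk0 | hk0
    · have hall : ∀ u i, H u i j = 0 := fun u i => (hHdeg u i j).resolve_left (by omega)
      exact absurd (by simp [hall]) hj'
    · have hb : ∀ (i : Fin m) (u : Fin n →₀ ℕ),
          ((coeff u (p i)) • H u i j).totalDegree ≤ k - 1 := by
        intro i u
        refine le_trans (totalDegree_smul_le _ _) ?_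
        rcases hHdeg u i j with h' | h'
        · omega
        · simp [h']
      have hsum : (∑ i, ∑ u ∈ (p i).support, coeff u (p i) • H u i j).totalDegree ≤ k - 1 :=
        le_trans (totalDegree_finset_sum _ _) (Finset.sup_le fun i _ =>
          le_trans (totalDegree_finset_sum _ _) (Finset.sup_le fun u _ => hb i u))
      omega
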